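/- For tempered weights wᵢ(α) ∝ exp(−(α/2)cᵢ) with cᵢ ≥ 0, the sum of squared weights ∑ᵢ wᵢ(α)² is nondecreasing in α ≥ 0; equivalently the effective sample size M_eff(α) = 1/∑ᵢ wᵢ(α)² is nonincreasing in α. -/

import Mathlib

open Finset Real

private lemma double_sum_pair {M : ℕ} (f g : Fin M → ℝ) :
    ∑ i, ∑ j, (f i * g j + f j * g i) = 2 * ((∑ i, f i) * (∑ j, g j)) := by
  simp only [Finset.sum_add_distrib, ← Finset.mul_sum, ← Finset.sum_mul]
  ring

private lemma cheb {M : ℕ} (u s : Fin M → ℝ) (hu : ∀ i, 0 ≤ u i)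
    (h : ∀ i j, 0 ≤ (u i - u j) * (s i - s j)) :
    (∑ i, (u i) ^ 2) * (∑ j, u j * s j) ≤ (∑ i, (u i) ^ 2 * s i) * (∑ j, u j) := by
  have key : ∀ i j : Fin M,
      u i ^ 2 * (u j * s j) + u j ^ 2 * (u i * s i)
        ≤ (u i ^ 2 * s i) * u j + (u j ^ 2 * s j) * u i := fun i j => by
    nlinarith [mul_nonneg (mul_nonneg (hu i) (hu j)) (h i j)]
  have hsum := Finset.sum_le_sum (fun i (_ : i ∈ Finset.univ) =>
    Finset.sum_le_sum (fun j (_ : j ∈ Finset.univ) => key i j))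
  rw [double_sum_pair (fun i => u i ^ 2) (fun j => u j * s j),
    double_sum_pair (fun i => u i ^ 2 * s i) (fun j => u j)] at hsum
  linarith

private lemma mono_aux {M : ℕ} (c : Fin M → ℝ) (hc : ∀ i, 0 ≤ c i) (hM : 0 < M)
    {a b : ℝ} (ha : 0 ≤ a) (hab : a ≤ b) :
    ∑ i, (Real.exp (-(a / 2) * c i) / ∑ j, Real.exp (-(a / 2) * c j)) ^ 2 ≤
    ∑ i, (Real.exp (-(b / 2) * c i) / ∑ j, Real.exp (-(b / 2) * c j)) ^ 2 := by
  set u : Fin M → ℝ := fun i => Real.exp (-(a / 2) * c i) with hu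
  set v : Fin M → ℝ := fun i => Real.exp (-(b / 2) * c i) with hvdef
  set t : Fin M → ℝ := fun i => Real.exp (-((b - a) / 2) * c i) with ht
  have hne : (Finset.univ : Finset (Fin M)).Nonempty := ⟨⟨0, hM⟩, Finset.mem_univ _⟩
  have hSa : 0 < ∑ j, u j := Finset.sum_pos (fun j _ => Real.exp_pos _) hne
  have hSb : 0 < ∑ j, v j := Finset.sum_pos (fun j _ => Real.exp_pos _) hne
  have hv : ∀ i, v i = u i * t i := fun i => by
    rw [hvdef, hu, ht]; dsimp only; rw [← Real.exp_add]; ring_nf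
  simp_rw [div_pow, ← Finset.sum_div]
  rw [div_le_div_iff₀ (by positivity) (by positivity)]
  -- Cauchy-Schwarz : (∑ v)^2 ≤ (∑ u) * (∑ u t²)
  have cs : (∑ j, v j) ^ 2 ≤ (∑ j, u j) * (∑ j, u j * (t j) ^ 2) := by
    have h2 := Finset.sum_mul_sq_le_sq_mul_sq Finset.univ
      (fun i => Real.exp (-(a / 4) * c i)) (fun i => Real.exp (-((2 * b - a) / 4) * c i))
    have e1 : ∀ i : Fin M,
        Real.exp (-(a / 4) * c i) * Real.exp (-((2 * b - a) / 4) * c i) = v i := fun i => by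
      rw [hvdef, ← Real.exp_add]; congr 1; ring
    have e2 : ∀ i : Fin M, Real.exp (-(a / 4) * c i) ^ 2 = u i := fun i => by
      rw [hu, sq, ← Real.exp_add]; congr 1; ring
    have e3 : ∀ i : Fin M,
        Real.exp (-((2 * b - a) / 4) * c i) ^ 2 = u i * (t i) ^ 2 := fun i => by
      rw [hu, ht, sq, sq, ← Real.exp_add, ← Real.exp_add, ← Real.exp_add]
      congr 1; ring
    simp_rw [e1, e2, e3] at h2
    exact h2
  -- Chebyshev : (∑ u²)(∑ u t²) ≤ (∑ u² t²)(∑ u)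
  have hmono : ∀ i j, 0 ≤ (u i - u j) * ((t i) ^ 2 - (t j) ^ 2) := by
    intro i j
    rcases le_total (c i) (c j) with h | h
    · have h1 : u j ≤ u i := by
        apply Real.exp_le_exp.mpr
        apply mul_le_mul_of_nonpos_left h (by linarith)
      have h2 : t j ≤ t i := by
        apply Real.exp_le_exp.mpr
        apply mul_le_mul_of_nonpos_left h (by linarith)
      have h2' : (t j) ^ 2 ≤ (t i) ^ 2 := by
        apply pow_le_pow_left₀ (Real.exp_pos _).le h2
      exact mul_nonneg (by linarith) (by linarith)
    · have h1 : u i ≤ u j := by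
        apply Real.exp_le_exp.mpr
        apply mul_le_mul_of_nonpos_left h (by linarith)
      have h2 : t i ≤ t j := by
        apply Real.exp_le_exp.mpr
        apply mul_le_mul_of_nonpos_left h (by linarith)
      have h2' : (t i) ^ 2 ≤ (t j) ^ 2 := by
        apply pow_le_pow_left₀ (Real.exp_pos _).le h2
      have : (0:ℝ) ≤ (u j - u i) * ((t j) ^ 2 - (t i) ^ 2) :=
        mul_nonneg (by linarith) (by linarith)
      nlinarith
  have ch := cheb u (fun i => (t i) ^ 2) (fun i => (Real.exp_pos _).le) hmono
  have hv2 : ∀ i, (v i) ^ 2 = (u i) ^ 2 * (t i) ^ 2 := fun i => by rw [hv i]; ring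
  show (∑ i, (u i) ^ 2) * (∑ j, v j) ^ 2 ≤ (∑ i, (v i) ^ 2) * (∑ j, u j) ^ 2
  simp_rw [hv2]
  calc (∑ i, (u i) ^ 2) * (∑ j, v j) ^ 2
      ≤ (∑ i, (u i) ^ 2) * ((∑ j, u j) * (∑ j, u j * (t j) ^ 2)) := by
        apply mul_le_mul_of_nonneg_left cs (by positivity)
    _ = ((∑ i, (u i) ^ 2) * (∑ j, u j * (t j) ^ 2)) * (∑ j, u j) := by ring
    _ ≤ ((∑ i, (u i) ^ 2 * (t i) ^ 2) * (∑ j, u j)) * (∑ j, u j) := by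
        apply mul_le_mul_of_nonneg_right ch hSa.le
    _ = (∑ i, (u i) ^ 2 * (t i) ^ 2) * (∑ j, u j) ^ 2 := by ring

theorem ess_monotone (M : ℕ) (c : Fin M → ℝ) (hc : ∀ i, 0 ≤ c i) :
    MonotoneOn
      (fun α : ℝ =>
        ∑ i, (Real.exp (-(α / 2) * c i) / ∑ j, Real.exp (-(α / 2) * c j)) ^ 2)
      (Set.Ici 0) ∧
    AntitoneOn
      (fun α : ℝ =>
        (∑ i, (Real.exp (-(α / 2) * c i) / ∑ j, Real.exp (-(α / 2) * c j)) ^ 2)⁻¹)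
      (Set.Ici 0) := by
  rcases Nat.eq_zero_or_pos M with hM | hM
  · subst hM
    constructor <;> intro x hx y hy hxy <;> simp
  · have hfpos : ∀ α : ℝ,
        0 < ∑ i, (Real.exp (-(α / 2) * c i) / ∑ j, Real.exp (-(α / 2) * c j)) ^ 2 := by
      intro α
      have hS : 0 < ∑ j, Real.exp (-(α / 2) * c j) :=
        Finset.sum_pos (fun j _ => Real.exp_pos _) ⟨⟨0, hM⟩, Finset.mem_univ _⟩
      exact Finset.sum_pos (fun i _ => by positivity) ⟨⟨0, hM⟩, Finset.mem_univ _⟩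
    constructor
    · intro x hx y hy hxy
      exact mono_aux c hc hM hx hxy
    · intro x hx y hy hxy
      exact inv_anti₀ (hfpos x) (mono_aux c hc hM hx hxy)
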